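/- Let f(z) = ∑_{k=0}^∞ a_k z^k be analytic on the open unit disk D with |f(z)| ≤ 1 for all z ∈ D. Then for all r ≤ 1/3: |a_0| + ∑_{k=1}^∞ (|a_k| + (1/2)|a_k|^2) r^k ≤ 1. -/

import Mathlib

open Metric

open MeasureTheory Complex Set
open scoped Real ENNReal NNReal

private lemma exp_integral_aux (j k : ℕ) :
    (∫ θ in Ioc (0:ℝ) (2*π), Complex.exp ((((j:ℂ) - k) * Complex.I) * θ))
      = if j = k then (2*π : ℂ) else 0 := by
  have h2π : (0:ℝ) ≤ 2*π := by positivity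
  rw [← intervalIntegral.integral_of_le h2π]
  by_cases hjk : j = k
  · simp [hjk]
  · have hc : (((j:ℂ) - k) * Complex.I) ≠ 0 := by
      simp only [ne_eq, mul_eq_zero, Complex.I_ne_zero, or_false, sub_eq_zero]
      exact_mod_cast hjk
    rw [integral_exp_mul_complex hc]
    have h1 : Complex.exp ((((j:ℂ) - k) * Complex.I) * (2*(π:ℂ))) = 1 := by
      have := Complex.exp_int_mul_two_pi_mul_I ((j:ℤ) - k)
      rw [← this]
      congr 1
      push_cast
      ring
    simp [h1, hjk]

set_option maxHeartbeats 1000000 in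
/-- Parseval-type identity for power series on the circle of radius ρ. -/
private lemma parseval_circle (b : ℕ → ℂ) {ρ : ℝ} (hρ0 : 0 ≤ ρ)
    (hb : Summable fun k => ‖b k‖ * ρ^k)
    (hb2 : Summable fun k => ‖b k‖^2 * (ρ^2)^k) :
    ∫ θ in Ioc (0:ℝ) (2*π), ‖∑' k : ℕ, b k * ((ρ:ℂ) * Complex.exp (θ * Complex.I))^k‖^2
      = 2*π * ∑' k : ℕ, ‖b k‖^2 * (ρ^2)^k := by
  set z : ℝ → ℂ := fun θ => (ρ:ℂ) * Complex.exp (θ * Complex.I) with hz_def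
  have hznorm : ∀ θ : ℝ, ‖z θ‖ = ρ := by
    intro θ
    simp only [hz_def, norm_mul, Complex.norm_real, Real.norm_eq_abs,
      Complex.norm_exp_ofReal_mul_I, mul_one, _root_.abs_of_nonneg hρ0]
  have hnorm_term : ∀ (θ : ℝ) (k : ℕ), ‖b k * z θ ^ k‖ = ‖b k‖ * ρ^k := by
    intro θ k
    rw [norm_mul, norm_pow, hznorm]
  have hsummand : ∀ θ : ℝ, Summable fun k => b k * z θ ^ k := by
    intro θ
    rw [← summable_norm_iff]
    simpa only [hnorm_term] using hb
  set g : ℝ → ℂ := fun θ => ∑' k : ℕ, b k * z θ ^ k with hg_def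
  set F : ℕ × ℕ → ℝ → ℂ := fun p θ =>
    (b p.1 * z θ ^ p.1) * (starRingEnd ℂ) (b p.2 * z θ ^ p.2) with hF_def
  have hFnorm : ∀ p θ, ‖F p θ‖ = (‖b p.1‖ * ρ^p.1) * (‖b p.2‖ * ρ^p.2) := by
    intro p θ
    simp only [hF_def, norm_mul, RCLike.norm_conj]
    rw [norm_pow, norm_pow, hznorm]
  have hCsum : Summable fun p : ℕ × ℕ => (‖b p.1‖ * ρ^p.1) * (‖b p.2‖ * ρ^p.2) :=
    hb.mul_of_nonneg hb (fun k => by positivity) (fun k => by positivity)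
  have hFsummable : ∀ θ, Summable fun p : ℕ × ℕ => F p θ := by
    intro θ
    rw [← summable_norm_iff]
    simpa only [hFnorm] using hCsum
  have hpt : ∀ θ : ℝ, ((‖g θ‖^2 : ℝ) : ℂ) = ∑' p : ℕ × ℕ, F p θ := by
    intro θ
    have h1 : HasSum (fun k => b k * z θ ^ k) (g θ) := (hsummand θ).hasSum
    have h2 : HasSum (fun k => (starRingEnd ℂ) (b k * z θ ^ k)) ((starRingEnd ℂ) (g θ)) := by
      simpa using h1.star
    have h3 := h1.mul h2 (hFsummable θ)
    have h4 : (g θ) * (starRingEnd ℂ) (g θ) = ∑' p : ℕ × ℕ, F p θ := h3.tsum_eq.symm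
    rw [← h4, Complex.mul_conj, Complex.normSq_eq_norm_sq]
  have hFcont : ∀ p : ℕ × ℕ, Continuous (F p) := by
    intro p
    have hzc : Continuous z := by
      exact continuous_const.mul (Complex.continuous_exp.comp
        ((Complex.continuous_ofReal).mul continuous_const))
    exact ((continuous_const.mul (hzc.pow _))).mul
      (Complex.continuous_conj.comp (continuous_const.mul (hzc.pow _)))
  have hμ : (volume (Ioc (0:ℝ) (2*π))) = ENNReal.ofReal (2*π) := by
    rw [Real.volume_Ioc]; norm_num
  have hlint : ∑' p : ℕ × ℕ, ∫⁻ θ in Ioc (0:ℝ) (2*π), ‖F p θ‖₊ ≠ ⊤ := by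
    have heq : ∀ p : ℕ × ℕ, (∫⁻ θ in Ioc (0:ℝ) (2*π), (‖F p θ‖₊ : ℝ≥0∞))
        = ENNReal.ofReal ((‖b p.1‖ * ρ^p.1) * (‖b p.2‖ * ρ^p.2) * (2*π)) := by
      intro p
      have h5 : ∀ θ : ℝ, (‖F p θ‖₊ : ℝ≥0∞)
          = ENNReal.ofReal ((‖b p.1‖ * ρ^p.1) * (‖b p.2‖ * ρ^p.2)) := by
        intro θ
        rw [← hFnorm p θ, ofReal_norm, enorm_eq_nnnorm]
      simp_rw [h5]
      rw [setLIntegral_const, hμ, ← ENNReal.ofReal_mul (by positivity)]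
    simp_rw [heq]
    rw [← ENNReal.ofReal_tsum_of_nonneg (fun p => by positivity)
      (by exact hCsum.mul_right _)]
    exact ENNReal.ofReal_ne_top
  have hswap : (∫ θ in Ioc (0:ℝ) (2*π), ((‖g θ‖^2 : ℝ) : ℂ))
      = ∑' p : ℕ × ℕ, ∫ θ in Ioc (0:ℝ) (2*π), F p θ := by
    rw [show (fun θ => ((‖g θ‖^2 : ℝ) : ℂ)) = fun θ => ∑' p : ℕ × ℕ, F p θ from funext hpt]
    exact integral_tsum (fun p => (hFcont p).aestronglyMeasurable) hlint
  -- rewrite F p θ as constant * exp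
  have hFeq : ∀ (j k : ℕ) (θ : ℝ), F (j,k) θ
      = (b j * (starRingEnd ℂ) (b k) * (ρ:ℂ)^(j+k))
        * Complex.exp ((((j:ℂ) - k) * Complex.I) * θ) := by
    intro j k θ
    have e1 : ∀ n : ℕ, (z θ)^n = (ρ:ℂ)^n * Complex.exp ((n:ℂ) * (θ * Complex.I)) := by
      intro n
      rw [hz_def, mul_pow, Complex.exp_nat_mul]
    have e2 : (starRingEnd ℂ) ((z θ)^k) = (ρ:ℂ)^k * Complex.exp (-(k:ℂ) * (θ * Complex.I)) := by
      rw [e1, map_mul, ← Complex.exp_conj]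
      simp [Complex.conj_ofReal]
    simp only [hF_def]
    rw [map_mul, e1 j, e2, ← mul_assoc]
    rw [show b j * ((ρ:ℂ)^j * Complex.exp ((j:ℂ) * (θ*Complex.I))) * (starRingEnd ℂ) (b k)
        * ((ρ:ℂ)^k * Complex.exp (-(k:ℂ) * (θ*Complex.I)))
      = (b j * (starRingEnd ℂ) (b k) * ((ρ:ℂ)^j * (ρ:ℂ)^k))
        * (Complex.exp ((j:ℂ) * (θ*Complex.I)) * Complex.exp (-(k:ℂ) * (θ*Complex.I))) by ring]
    rw [← Complex.exp_add, ← pow_add]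
    congr 1
    ring
  set G : ℕ × ℕ → ℂ := fun p =>
    if p.2 = p.1 then ((‖b p.1‖^2 * (ρ^2)^p.1 : ℝ) : ℂ) * ((2*π:ℝ) : ℂ) else 0 with hG_def
  have hint : ∀ p : ℕ × ℕ, (∫ θ in Ioc (0:ℝ) (2*π), F p θ) = G p := by
    rintro ⟨j, k⟩
    simp only [hG_def]
    rw [show (fun θ => F (j,k) θ) = fun θ : ℝ => (b j * (starRingEnd ℂ) (b k) * (ρ:ℂ)^(j+k))
        * Complex.exp ((((j:ℂ) - k) * Complex.I) * θ) from funext (hFeq j k)]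
    rw [MeasureTheory.integral_const_mul, exp_integral_aux j k]
    by_cases hjk : j = k
    · subst hjk
      rw [if_pos rfl, if_pos rfl]
      rw [Complex.mul_conj, Complex.normSq_eq_norm_sq]
      push_cast
      rw [← pow_mul]
      ring
    · rw [if_neg hjk, if_neg (fun h : k = j => hjk h.symm), mul_zero]
  have hpow : ∀ j : ℕ, (ρ^2)^j = ρ^j * ρ^j := by
    intro j
    rw [← pow_mul, two_mul, pow_add]
  have hGsum : Summable G := by
    apply Summable.of_norm_bounded (hCsum.mul_right (2*π))
    rintro ⟨j, k⟩
    by_cases hj : k = j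
    · subst hj
      simp only [hG_def, if_pos rfl]
      rw [norm_mul, Complex.norm_real, Complex.norm_real, Real.norm_eq_abs, Real.norm_eq_abs,
        _root_.abs_of_nonneg (by positivity : (0:ℝ) ≤ ‖b k‖^2 * (ρ^2)^k),
        _root_.abs_of_nonneg (by positivity : (0:ℝ) ≤ 2*π), hpow]
      apply le_of_eq
      ring
    · simp only [hG_def, if_neg hj, norm_zero]
      positivity
  have hdiag : ∑' p : ℕ × ℕ, G p
      = ((∑' k : ℕ, ‖b k‖^2 * (ρ^2)^k : ℝ) : ℂ) * ((2*π:ℝ) : ℂ) := by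
    rw [Summable.tsum_prod' hGsum (fun j => by
      apply (hasSum_ite_eq j (((‖b j‖^2 * (ρ^2)^j : ℝ) : ℂ) * ((2*π:ℝ) : ℂ))).summable.congr
      intro k
      simp only [hG_def])]
    have : ∀ j : ℕ, (∑' k : ℕ, G (j, k)) = ((‖b j‖^2 * (ρ^2)^j : ℝ) : ℂ) * ((2*π:ℝ) : ℂ) := by
      intro j
      have := tsum_ite_eq j (fun _ : ℕ => ((‖b j‖^2 * (ρ^2)^j : ℝ) : ℂ) * ((2*π:ℝ) : ℂ))
      beta_reduce at this
      rw [← this]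
    simp_rw [this]
    rw [tsum_mul_right, Complex.ofReal_tsum]
  have h9 : ∫ θ in Ioc (0:ℝ) (2*π), ((‖g θ‖^2 : ℝ) : ℂ)
      = ((∫ θ in Ioc (0:ℝ) (2*π), ‖g θ‖^2 : ℝ) : ℂ) := integral_ofReal
  have hfinal : ((∫ θ in Ioc (0:ℝ) (2*π), ‖g θ‖^2 : ℝ) : ℂ)
      = ((2*π * ∑' k : ℕ, ‖b k‖^2 * (ρ^2)^k : ℝ) : ℂ) := by
    rw [← h9, hswap, tsum_congr hint, hdiag]
    push_cast
    ring
  have := Complex.ofReal_inj.mp hfinal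
  simpa only [hg_def] using this

private lemma normSq_key (u v : ℂ) :
    Complex.normSq (1 - (starRingEnd ℂ) u * v) - Complex.normSq (v - u)
      = (1 - Complex.normSq u) * (1 - Complex.normSq v) := by
  simp only [Complex.normSq_apply, Complex.sub_re, Complex.sub_im, Complex.mul_re,
    Complex.mul_im, Complex.one_re, Complex.one_im, Complex.conj_re, Complex.conj_im]
  ring

private lemma schwarz_pick (f : ℂ → ℂ) (hd : DifferentiableOn ℂ f (ball 0 1))
    (hb : ∀ z ∈ ball (0:ℂ) 1, ‖f z‖ ≤ 1) {z : ℂ} (hz : z ∈ ball (0:ℂ) 1) :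
    ‖f z - f 0‖ ≤ ‖z‖ * ‖1 - (starRingEnd ℂ) (f 0) * f z‖ := by
  have h0mem : (0:ℂ) ∈ ball (0:ℂ) 1 := mem_ball_self one_pos
  by_cases hcon : ∃ w ∈ ball (0:ℂ) 1, ‖f w‖ = 1
  · obtain ⟨w, hw, hfw⟩ := hcon
    have hmax : IsMaxOn (norm ∘ f) (ball (0:ℂ) 1) w := by
      intro x hx
      simp only [Function.comp_apply, hfw]
      exact hb x hx
    have heq := Complex.eqOn_of_isPreconnected_of_isMaxOn_norm
      (convex_ball (0:ℂ) 1).isPreconnected isOpen_ball hd hw hmax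
    have h1 : f z = f w := heq hz
    have h2 : f 0 = f w := heq h0mem
    rw [h1, h2, sub_self, norm_zero]
    positivity
  · push_neg at hcon
    have hlt : ∀ w ∈ ball (0:ℂ) 1, ‖f w‖ < 1 :=
      fun w hw => lt_of_le_of_ne (hb w hw) (hcon w hw)
    set a := f 0 with ha_def
    have hA : ‖a‖ < 1 := hlt 0 h0mem
    have hden : ∀ w ∈ ball (0:ℂ) 1, 1 - (starRingEnd ℂ) a * f w ≠ 0 := by
      intro w hw h
      have h1 : (1:ℂ) = (starRingEnd ℂ) a * f w := by linear_combination h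
      have h2 : (1:ℝ) = ‖a‖ * ‖f w‖ := by
        calc (1:ℝ) = ‖(1:ℂ)‖ := by simp
        _ = ‖(starRingEnd ℂ) a * f w‖ := by rw [← h1]
        _ = ‖a‖ * ‖f w‖ := by rw [norm_mul, Complex.norm_conj]
      nlinarith [hlt w hw, norm_nonneg a, norm_nonneg (f w)]
    set F : ℂ → ℂ := fun w => (f w - a) / (1 - (starRingEnd ℂ) a * f w) with hF_def
    have hFd : DifferentiableOn ℂ F (ball 0 1) := by
      apply DifferentiableOn.div
      · exact hd.sub_const a
      · exact (differentiableOn_const _).sub ((differentiableOn_const _).mul hd)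
      · exact hden
    have hF0 : F 0 = 0 := by
      rw [hF_def]
      simp [← ha_def]
    have hFmaps : MapsTo F (ball (0:ℂ) 1) (ball (0:ℂ) 1) := by
      intro w hw
      rw [mem_ball_zero_iff, hF_def]
      simp only [norm_div]
      have hpos : 0 < ‖1 - (starRingEnd ℂ) a * f w‖ := by
        exact norm_pos_iff.mpr (hden w hw)
      rw [div_lt_one hpos]
      have hk := normSq_key a (f w)
      rw [← Complex.sq_norm (1 - (starRingEnd ℂ) a * f w), ← Complex.sq_norm (f w - a),
        ← Complex.sq_norm a, ← Complex.sq_norm (f w)] at hk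
      have h1 : ‖f w - a‖ ^ 2 < ‖1 - (starRingEnd ℂ) a * f w‖ ^ 2 := by
        have hp : 0 < (1 - ‖a‖ ^ 2) * (1 - ‖f w‖ ^ 2) := by
          have := hlt w hw
          have := norm_nonneg a
          have := norm_nonneg (f w)
          apply mul_pos <;> nlinarith
        linarith
      exact lt_of_pow_lt_pow_left₀ 2 (norm_nonneg _) h1
    have hs := Complex.norm_le_norm_of_mapsTo_ball hFd (hFmaps.mono_right ball_subset_closedBall) hF0
      (mem_ball_zero_iff.mp hz)
    have hmul : f z - a = F z * (1 - (starRingEnd ℂ) a * f z) :=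
      (div_mul_cancel₀ _ (hden z hz)).symm
    calc ‖f z - a‖ = ‖F z‖ * ‖1 - (starRingEnd ℂ) a * f z‖ := by rw [hmul, norm_mul]
    _ ≤ ‖z‖ * ‖1 - (starRingEnd ℂ) a * f z‖ := by
        apply mul_le_mul_of_nonneg_right _ (norm_nonneg _)
        simpa using hs

private lemma final_algebra {A S1 S2 r : ℝ} (hA0 : 0 ≤ A) (hA1 : A ≤ 1)
    (hr0 : 0 < r) (hr : r ≤ 1/3) (hS1 : 0 ≤ S1) (hS2 : 0 ≤ S2)
    (key1 : S2 * (1 - A^2*r) ≤ r * (1-A^2)^2)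
    (key2 : S1^2 ≤ S2 * (r/(1-r))) :
    A + (S1 + (1/2)*S2) ≤ 1 := by
  have hD : (0:ℝ) < 3 - A^2 := by nlinarith
  set T : ℝ := (1-A^2)^2/(3-A^2) with hT_def
  have hT2 : T * (3 - A^2) = (1-A^2)^2 := by
    rw [hT_def, div_mul_cancel₀ _ hD.ne']
  have hTnn : 0 ≤ T := by positivity
  have hS2T : S2 ≤ T := by
    have h2 : S2 * (r * (3 - A^2)) ≤ S2 * (1 - A^2*r) := by
      apply mul_le_mul_of_nonneg_left _ hS2
      nlinarith
    have h3 : (S2 * (3 - A^2)) * r ≤ (1-A^2)^2 * r := by nlinarith [le_trans h2 key1]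
    have h4 : S2 * (3 - A^2) ≤ (1-A^2)^2 := le_of_mul_le_mul_right h3 hr0
    rw [← hT2] at h4
    exact le_of_mul_le_mul_right h4 hD
  have hR : r/(1-r) ≤ 1/2 := by
    rw [div_le_iff₀ (by linarith)]
    linarith
  have hq : S1^2 ≤ T * (1/2) := by
    have h4 : S2 * (r/(1-r)) ≤ T * (1/2) :=
      mul_le_mul hS2T hR (div_nonneg hr0.le (by linarith)) hTnn
    linarith
  set c : ℝ := 1 - A - T * (1/2) with hc_def
  have hm : c * (2*(3-A^2)) = 2*(1-A)*(3-A^2) - (1-A^2)^2 := by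
    have : c * (2*(3-A^2)) = 2*(1-A)*(3-A^2) - (T * (3-A^2)) := by
      rw [hc_def]; ring
    rw [this, hT2]
  have hc0 : 0 ≤ c := by
    have h6 : (1-A^2)^2 ≤ 2*(1-A)*(3-A^2) := by nlinarith
    have h7 : 0 ≤ c * (2*(3-A^2)) := by rw [hm]; linarith
    nlinarith [h7, hD]
  have hcsq : T * (1/2) ≤ c^2 := by
    have hNp : 0 ≤ (1-A)^4*(19+16*A+A^4) := by positivity
    have h7 : T * (1/2) * (2*(3-A^2))^2 ≤ c^2 * (2*(3-A^2))^2 := by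
      have e1 : T * (1/2) * (2*(3-A^2))^2 = (T * (3-A^2)) * ((3-A^2) * 2) := by ring
      have e2 : c^2 * (2*(3-A^2))^2 = (c * (2*(3-A^2)))^2 := by ring
      rw [e1, e2, hT2, hm]
      have hN : (2*(1-A)*(3-A^2) - (1-A^2)^2)^2 - (1-A^2)^2*((3-A^2)*2)
          = (1-A)^4*(19+16*A+A^4) := by ring
      linarith [hN, hNp]
    exact le_of_mul_le_mul_right h7 (by positivity)
  have hS1c : S1 ≤ c := by
    rw [← Real.sqrt_sq hS1, ← Real.sqrt_sq hc0]
    exact Real.sqrt_le_sqrt (le_trans hq hcsq)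
  have h8 : (1/2)*S2 ≤ T*(1/2) := by linarith
  rw [hc_def] at hS1c
  linarith

private lemma summable_sq {u : ℕ → ℝ} (hu0 : ∀ k, 0 ≤ u k) (hu : Summable u) :
    Summable (fun k => u k ^ 2) := by
  apply Summable.of_norm_bounded_eventually hu
  rw [Nat.cofinite_eq_atTop]
  filter_upwards [hu.tendsto_atTop_zero.eventually (ge_mem_nhds one_pos)] with k hk
  rw [Real.norm_eq_abs, _root_.abs_of_nonneg (by positivity)]
  nlinarith [hu0 k]

/-- Theorem 4: if `f` is analytic on the unit disk with `|f| ≤ 1`, then for `r ≤ 1/3`,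
`|a_0| + ∑_{k=1}^∞ (|a_k| + (1/2)|a_k|^2) r^k ≤ 1`. -/
theorem improved_bohr_squares (f : ℂ → ℂ) (a : ℕ → ℂ)
    (hf : AnalyticOn ℂ f (ball (0:ℂ) 1))
    (hsum : ∀ z ∈ ball (0:ℂ) 1, HasSum (fun k : ℕ => a k * z ^ k) (f z))
    (hbound : ∀ z ∈ ball (0:ℂ) 1, ‖f z‖ ≤ 1)
    (r : ℝ) (hr0 : 0 ≤ r) (hr : r ≤ 1/3) :
    ‖a 0‖ +
      ∑' k : ℕ, (‖a (k + 1)‖ + (1/2) * (‖a (k + 1)‖) ^ 2) * r ^ (k + 1)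
      ≤ 1 := by
  have h0mem : (0:ℂ) ∈ ball (0:ℂ) 1 := mem_ball_self one_pos
  have hf0 : f 0 = a 0 := by
    have h1 := hsum 0 h0mem
    have he : (fun k : ℕ => a k * (0:ℂ)^k) = (fun k => if k = 0 then a 0 else 0) := by
      funext k
      match k with
      | 0 => simp
      | Nat.succ n => simp
    rw [he] at h1
    exact h1.unique (hasSum_ite_eq 0 (a 0))
  set A : ℝ := ‖a 0‖ with hA_def
  have hA0 : 0 ≤ A := norm_nonneg _
  have hA1 : A ≤ 1 := by rw [hA_def, ← hf0]; exact hbound 0 h0mem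
  -- summability of ‖a k‖ t^k for t < 1
  have hs_abs : ∀ t : ℝ, 0 ≤ t → t < 1 → Summable (fun k => ‖a k‖ * t^k) := by
    intro t ht0 ht1
    have hmem : (t:ℂ) ∈ ball (0:ℂ) 1 := by
      rw [mem_ball_zero_iff]
      simpa [Complex.norm_real, Real.norm_eq_abs, _root_.abs_of_nonneg ht0] using ht1
    have h2 := (hsum _ hmem).summable
    rw [← summable_norm_iff] at h2
    apply h2.congr
    intro k
    rw [norm_mul, norm_pow, Complex.norm_real, Real.norm_eq_abs, _root_.abs_of_nonneg ht0]
  rcases eq_or_lt_of_le hr0 with hrz | hrpos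
  · rw [← hrz]
    simp only [zero_pow (Nat.succ_ne_zero _), mul_zero, tsum_zero, add_zero]
    exact hA1
  · -- main case: 0 < r
    have hr1 : r < 1 := by linarith
    set ρ : ℝ := Real.sqrt r with hρ_def
    have hρ0 : 0 ≤ ρ := Real.sqrt_nonneg r
    have hρsq : ρ^2 = r := Real.sq_sqrt hr0
    have hρ1 : ρ < 1 := by nlinarith
    -- the two coefficient sequences
    set b1 : ℕ → ℂ := fun k => if k = 0 then 0 else a k with hb1_def
    set b2 : ℕ → ℂ := fun k => (if k = 0 then 1 else 0) - (starRingEnd ℂ) (a 0) * a k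
      with hb2_def
    have hb1succ : ∀ k : ℕ, b1 (k+1) = a (k+1) := fun k => by simp [hb1_def]
    have hb2succ : ∀ k : ℕ, b2 (k+1) = -((starRingEnd ℂ) (a 0) * a (k+1)) := fun k => by
      simp [hb2_def]
    -- pointwise sums
    have hb1sum : ∀ z ∈ ball (0:ℂ) 1, HasSum (fun k => b1 k * z^k) (f z - a 0) := by
      intro z hz
      have h1 := (hsum z hz).sub (hasSum_ite_eq 0 (a 0))
      have he : (fun k : ℕ => b1 k * z^k)
          = fun k => a k * z^k - (if k = 0 then a 0 else 0) := by
        funext k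
        cases k <;> simp [hb1_def]
      rw [he]
      exact h1
    have hb2sum : ∀ z ∈ ball (0:ℂ) 1,
        HasSum (fun k => b2 k * z^k) (1 - (starRingEnd ℂ) (a 0) * f z) := by
      intro z hz
      have h1 := (hasSum_ite_eq 0 (1:ℂ)).sub ((hsum z hz).mul_left ((starRingEnd ℂ) (a 0)))
      have he : (fun k : ℕ => b2 k * z^k)
          = fun k => (if k = 0 then (1:ℂ) else 0) - (starRingEnd ℂ) (a 0) * (a k * z^k) := by
        funext k
        cases k <;> (simp [hb2_def]; try ring)
      rw [he]
      exact h1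
    -- summability inputs for parseval
    have hs_ρ : Summable (fun k => ‖a k‖ * ρ^k) := hs_abs ρ hρ0 hρ1
    have hsq_ρ : Summable (fun k => ‖a k‖^2 * (ρ^2)^k) := by
      apply (summable_sq (fun k => by positivity) hs_ρ).congr
      intro k
      rw [mul_pow, ← pow_mul, mul_comm k 2, pow_mul]
    have hb1n : Summable (fun k => ‖b1 k‖ * ρ^k) := by
      apply Summable.of_nonneg_of_le (fun k => by positivity) _ hs_ρ
      intro k
      apply mul_le_mul_of_nonneg_right _ (by positivity)
      cases k <;> simp [hb1_def]
    have hb1sq : Summable (fun k => ‖b1 k‖^2 * (ρ^2)^k) := by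
      apply Summable.of_nonneg_of_le (fun k => by positivity) _ hsq_ρ
      intro k
      apply mul_le_mul_of_nonneg_right _ (by positivity)
      cases k <;> simp [hb1_def]
    have hb2n : Summable (fun k => ‖b2 k‖ * ρ^k) := by
      rw [← summable_nat_add_iff 1]
      apply (((summable_nat_add_iff 1).mpr hs_ρ).mul_left A).congr
      intro k
      simp only [hb2succ, norm_neg, norm_mul, RCLike.norm_conj, ← hA_def]
      ring
    have hb2sq : Summable (fun k => ‖b2 k‖^2 * (ρ^2)^k) := by
      rw [← summable_nat_add_iff 1]
      apply (((summable_nat_add_iff (f := fun k => ‖a k‖^2 * (ρ^2)^k) 1).mpr hsq_ρ).mul_left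
        (A^2)).congr
      intro k
      simp only [hb2succ, norm_neg, norm_mul, RCLike.norm_conj, ← hA_def]
      ring
    -- the circle map
    have hd : DifferentiableOn ℂ f (ball 0 1) := hf.differentiableOn
    have hcmap : Continuous (fun θ : ℝ => (ρ:ℂ) * Complex.exp (θ * Complex.I)) :=
      continuous_const.mul (Complex.continuous_exp.comp
        ((Complex.continuous_ofReal).mul continuous_const))
    have hznormθ : ∀ θ : ℝ, ‖(ρ:ℂ) * Complex.exp ((θ:ℂ) * Complex.I)‖ = ρ := by
      intro θ
      rw [norm_mul, Complex.norm_real, Real.norm_eq_abs,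
        Complex.norm_exp_ofReal_mul_I, mul_one, _root_.abs_of_nonneg hρ0]
    have hmemθ : ∀ θ : ℝ, ((ρ:ℂ) * Complex.exp ((θ:ℂ) * Complex.I)) ∈ ball (0:ℂ) 1 := by
      intro θ
      rw [mem_ball_zero_iff, hznormθ]
      exact hρ1
    -- parseval on both series
    have P1 := parseval_circle b1 hρ0 hb1n hb1sq
    have P2 := parseval_circle b2 hρ0 hb2n hb2sq
    have hint1 : ∀ θ : ℝ, ‖∑' k : ℕ, b1 k * ((ρ:ℂ) * Complex.exp ((θ:ℂ) * Complex.I))^k‖^2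
        = ‖f ((ρ:ℂ) * Complex.exp ((θ:ℂ) * Complex.I)) - a 0‖^2 := fun θ => by
      rw [(hb1sum _ (hmemθ θ)).tsum_eq]
    have hint2 : ∀ θ : ℝ, ‖∑' k : ℕ, b2 k * ((ρ:ℂ) * Complex.exp ((θ:ℂ) * Complex.I))^k‖^2
        = ‖1 - (starRingEnd ℂ) (a 0) * f ((ρ:ℂ) * Complex.exp ((θ:ℂ) * Complex.I))‖^2 :=
      fun θ => by rw [(hb2sum _ (hmemθ θ)).tsum_eq]
    simp only [hint1] at P1
    simp only [hint2] at P2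
    -- integrability
    have hfc : Continuous (fun θ : ℝ => f ((ρ:ℂ) * Complex.exp ((θ:ℂ) * Complex.I))) :=
      hf.continuousOn.comp_continuous hcmap hmemθ
    have hu1c : Continuous (fun θ : ℝ =>
        ‖f ((ρ:ℂ) * Complex.exp ((θ:ℂ) * Complex.I)) - a 0‖^2) :=
      ((hfc.sub continuous_const).norm).pow 2
    have hu2c : Continuous (fun θ : ℝ =>
        ‖1 - (starRingEnd ℂ) (a 0) * f ((ρ:ℂ) * Complex.exp ((θ:ℂ) * Complex.I))‖^2) :=
      ((continuous_const.sub (continuous_const.mul hfc)).norm).pow 2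
    have int1 : IntegrableOn (fun θ : ℝ =>
        ‖f ((ρ:ℂ) * Complex.exp ((θ:ℂ) * Complex.I)) - a 0‖^2) (Ioc 0 (2*π)) volume :=
      (hu1c.continuousOn.integrableOn_Icc).mono_set Ioc_subset_Icc_self
    have int2 : IntegrableOn (fun θ : ℝ =>
        ‖1 - (starRingEnd ℂ) (a 0) * f ((ρ:ℂ) * Complex.exp ((θ:ℂ) * Complex.I))‖^2)
        (Ioc 0 (2*π)) volume :=
      (hu2c.continuousOn.integrableOn_Icc).mono_set Ioc_subset_Icc_self
    -- pointwise Schwarz-Pick comparison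
    have hptw : ∀ θ ∈ Ioc (0:ℝ) (2*π),
        ‖f ((ρ:ℂ) * Complex.exp ((θ:ℂ) * Complex.I)) - a 0‖^2
        ≤ r * ‖1 - (starRingEnd ℂ) (a 0) * f ((ρ:ℂ) * Complex.exp ((θ:ℂ) * Complex.I))‖^2 := by
      intro θ _
      have hsp := schwarz_pick f hd hbound (hmemθ θ)
      rw [hf0, hznormθ] at hsp
      have h1 := pow_le_pow_left₀ (norm_nonneg _) hsp 2
      rw [mul_pow, hρsq] at h1
      exact h1
    -- integrate the comparison
    have imono := setIntegral_mono_on int1 (int2.const_mul r) measurableSet_Ioc hptw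
    rw [P1] at imono
    have h2π : (0:ℝ) < 2*π := by positivity
    have hineq : 2*π*(∑' k : ℕ, ‖b1 k‖^2*(ρ^2)^k)
        ≤ r * (2*π*(∑' k : ℕ, ‖b2 k‖^2*(ρ^2)^k)) := by
      calc 2*π*(∑' k : ℕ, ‖b1 k‖^2*(ρ^2)^k) ≤ _ := imono
      _ = r * (2*π*(∑' k : ℕ, ‖b2 k‖^2*(ρ^2)^k)) := by
          rw [MeasureTheory.integral_const_mul, P2]
    -- replace ρ² by r
    rw [hρsq] at hineq hb1sq hb2sq hsq_ρ
    -- identify the sums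
    set S2 : ℝ := ∑' k : ℕ, ‖a (k+1)‖^2 * r^(k+1) with hS2_def
    set S1 : ℝ := ∑' k : ℕ, ‖a (k+1)‖ * r^(k+1) with hS1_def
    have hs2 : Summable (fun k : ℕ => ‖a (k+1)‖^2 * r^(k+1)) :=
      (summable_nat_add_iff (f := fun k => ‖a k‖^2 * r^k) 1).mpr hsq_ρ
    have hs1 : Summable (fun k : ℕ => ‖a (k+1)‖ * r^(k+1)) :=
      (summable_nat_add_iff (f := fun k => ‖a k‖ * r^k) 1).mpr (hs_abs r hr0 hr1)
    have hSb1 : ∑' k : ℕ, ‖b1 k‖^2*r^k = S2 := by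
      rw [Summable.tsum_eq_zero_add hb1sq, hS2_def]
      have h0 : ‖b1 0‖^2 * r^0 = 0 := by simp [hb1_def]
      rw [h0, zero_add]
      exact tsum_congr fun k => by rw [hb1succ]
    have hb20 : b2 0 = ((1 - A^2 : ℝ) : ℂ) := by
      rw [hb2_def]
      simp only [if_pos rfl]
      rw [mul_comm, Complex.mul_conj, Complex.normSq_eq_norm_sq, ← hA_def]
      push_cast
      ring
    have hA2le : A^2 ≤ 1 := by nlinarith
    have hSb2 : ∑' k : ℕ, ‖b2 k‖^2*r^k = (1-A^2)^2 + A^2 * S2 := by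
      rw [Summable.tsum_eq_zero_add hb2sq]
      have h0 : ‖b2 0‖^2 * r^0 = (1-A^2)^2 := by
        rw [hb20]
        simp only [pow_zero, mul_one, Complex.norm_real, Real.norm_eq_abs]
        rw [_root_.abs_of_nonneg (by linarith : (0:ℝ) ≤ 1 - A^2)]
      rw [h0]
      congr 1
      have : ∀ k : ℕ, ‖b2 (k+1)‖^2 * r^(k+1) = A^2 * (‖a (k+1)‖^2 * r^(k+1)) := by
        intro k
        rw [hb2succ, norm_neg, norm_mul, RCLike.norm_conj, ← hA_def]
        ring
      rw [tsum_congr this, tsum_mul_left, hS2_def]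
    rw [hSb1, hSb2] at hineq
    -- key1
    have h9 : (2*π) * S2 ≤ (2*π) * (r*((1-A^2)^2 + A^2*S2)) := by linarith [hineq]
    have h10 : S2 ≤ r*((1-A^2)^2 + A^2*S2) := le_of_mul_le_mul_left h9 h2π
    have key1 : S2 * (1 - A^2*r) ≤ r * (1-A^2)^2 := by nlinarith [h10]
    -- Cauchy-Schwarz for S1
    have hS2nn : 0 ≤ S2 := tsum_nonneg fun k => by positivity
    have hS1nn : 0 ≤ S1 := tsum_nonneg fun k => by positivity
    have hgeo : Summable (fun k : ℕ => r^(k+1)) :=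
      (summable_nat_add_iff (f := fun k => r^k) 1).mpr (summable_geometric_of_lt_one hr0 hr1)
    have hgeo_sum : ∑' k : ℕ, r^(k+1) = r/(1-r) := by
      have he : (fun k : ℕ => r^(k+1)) = fun k => r * r^k := funext fun k => pow_succ' r k
      rw [he, tsum_mul_left, tsum_geometric_of_lt_one hr0 hr1, div_eq_mul_inv]
    have hXnn : 0 ≤ S2 * (r/(1-r)) := mul_nonneg hS2nn (div_nonneg hr0 (by linarith))
    have key2 : S1^2 ≤ S2 * (r/(1-r)) := by
      have hpart : ∀ s : Finset ℕ, ∑ k ∈ s, ‖a (k+1)‖*r^(k+1)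
          ≤ Real.sqrt (S2 * (r/(1-r))) := by
        intro s
        have hCS := Finset.sum_mul_sq_le_sq_mul_sq s
          (fun k => ‖a (k+1)‖ * Real.sqrt (r^(k+1))) (fun k => Real.sqrt (r^(k+1)))
        have he1 : ∀ k : ℕ, (‖a (k+1)‖ * Real.sqrt (r^(k+1))) * Real.sqrt (r^(k+1))
            = ‖a (k+1)‖ * r^(k+1) := fun k => by
          rw [mul_assoc, Real.mul_self_sqrt (by positivity)]
        have he2 : ∀ k : ℕ, (‖a (k+1)‖ * Real.sqrt (r^(k+1)))^2
            = ‖a (k+1)‖^2 * r^(k+1) := fun k => by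
          rw [mul_pow, Real.sq_sqrt (by positivity)]
        have he3 : ∀ k : ℕ, (Real.sqrt (r^(k+1)))^2 = r^(k+1) := fun k =>
          Real.sq_sqrt (by positivity)
        simp only [he1, he2, he3] at hCS
        have hb1' : ∑ k ∈ s, ‖a (k+1)‖^2 * r^(k+1) ≤ S2 :=
          Summable.sum_le_tsum s (fun k _ => by positivity) hs2
        have hb2' : ∑ k ∈ s, r^(k+1) ≤ r/(1-r) := by
          rw [← hgeo_sum]
          exact Summable.sum_le_tsum s (fun k _ => by positivity) hgeo
        have hs_nn : 0 ≤ ∑ k ∈ s, ‖a (k+1)‖*r^(k+1) :=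
          Finset.sum_nonneg fun k _ => by positivity
        rw [Real.le_sqrt hs_nn hXnn]
        calc (∑ k ∈ s, ‖a (k+1)‖*r^(k+1))^2
            ≤ (∑ k ∈ s, ‖a (k+1)‖^2 * r^(k+1)) * (∑ k ∈ s, r^(k+1)) := hCS
        _ ≤ S2 * (r/(1-r)) := by
            apply mul_le_mul hb1' hb2' (Finset.sum_nonneg fun k _ => by positivity) hS2nn
      have hS1le : S1 ≤ Real.sqrt (S2 * (r/(1-r))) := Summable.tsum_le_of_sum_le hs1 hpart
      calc S1^2 ≤ (Real.sqrt (S2 * (r/(1-r))))^2 := pow_le_pow_left₀ hS1nn hS1le 2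
      _ = S2 * (r/(1-r)) := Real.sq_sqrt hXnn
    -- final assembly
    have hgoal : ∑' k : ℕ, (‖a (k+1)‖ + 1/2*(‖a (k+1)‖)^2)*r^(k+1)
        = S1 + (1/2)*S2 := by
      have he : (fun k : ℕ => (‖a (k+1)‖ + 1/2*(‖a (k+1)‖)^2)*r^(k+1))
          = fun k => ‖a (k+1)‖*r^(k+1) + (1/2)*(‖a (k+1)‖^2*r^(k+1)) := by
        funext k
        ring
      rw [he, Summable.tsum_add hs1 (hs2.mul_left (1/2)), tsum_mul_left, hS1_def, hS2_def]
    rw [hgoal]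
    exact final_algebra hA0 hA1 hrpos hr hS1nn hS2nn key1 key2
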